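/- (Concave roof extensions are upper semicontinuous.) Let C be a compact subset of a finite-dimensional real normed vector space E, and let F : E → ℝ be bounded on C, upper semicontinuous on C, and concave on C in the sense that whenever x₁,…,x_k ∈ C, q₁,…,q_k ≥ 0 with ∑ q_i = 1 and ∑ q_i x_i ∈ C, one has F(∑ q_i x_i) ≥ ∑ q_i F(x_i). Define the concave roof extension F̂ on K := convexHull(C) by F̂(x) := sup{ ∑ q_i F(x_i) : k ∈ ℕ, x_i ∈ C, q_i ≥ 0, ∑ q_i = 1, ∑ q_i x_i = x }. Then F̂ is upper semicontinuous on K. -/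

import Mathlib

open scoped BigOperators
open Filter Topology

section Aux

lemma sum_pad {ι : Type*} [Fintype ι] {α : Type*} [AddCommMonoid α] {N : ℕ}
    (hcard : Fintype.card ι ≤ N) (e : Fin (Fintype.card ι) ≃ ι) (g : ι → α) :
    ∑ j : Fin N, (if h : (j : ℕ) < Fintype.card ι then g (e ⟨j, h⟩) else (0 : α)) =
      ∑ i, g i := by
  have key : ∀ f : ℕ → α, (∀ j (h : j < Fintype.card ι), f j = g (e ⟨j, h⟩)) →
      (∀ j, ¬ j < Fintype.card ι → f j = 0) →
      ∑ j ∈ Finset.range N, f j = ∑ i, g i := by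
    intro f hf1 hf2
    have h2 : ∑ j ∈ Finset.range N, f j = ∑ j ∈ Finset.range (Fintype.card ι), f j := by
      refine (Finset.sum_subset (Finset.range_mono hcard) ?_).symm
      intro j _ hj
      rw [Finset.mem_range] at hj
      exact hf2 j hj
    have h3 : ∑ j ∈ Finset.range (Fintype.card ι), f j = ∑ j : Fin (Fintype.card ι), f (j : ℕ) :=
      (Fin.sum_univ_eq_sum_range f (Fintype.card ι)).symm
    have h4 : ∑ j : Fin (Fintype.card ι), f (j : ℕ) = ∑ j : Fin (Fintype.card ι), g (e j) := by
      refine Finset.sum_congr rfl fun j _ => ?_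
      rw [hf1 _ j.isLt, Fin.eta]
    rw [h2, h3, h4, Equiv.sum_comp e g]
  rw [Fin.sum_univ_eq_sum_range
    (fun j => if h : j < Fintype.card ι then g (e ⟨j, h⟩) else (0 : α)) N]
  exact key _ (fun j h => dif_pos h) (fun j h => dif_neg h)

/-- Carathéodory with a fixed index type `Fin (finrank + 1)`. -/
lemma carat_fin {E' : Type*} [NormedAddCommGroup E'] [NormedSpace ℝ E']
    [FiniteDimensional ℝ E'] {G : Set E'} {x : E'} (hx : x ∈ convexHull ℝ G) :
    ∃ (z : Fin (Module.finrank ℝ E' + 1) → E') (q : Fin (Module.finrank ℝ E' + 1) → ℝ),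
      (∀ i, z i ∈ G) ∧ (∀ i, 0 ≤ q i) ∧ ∑ i, q i = 1 ∧ ∑ i, q i • z i = x := by
  obtain ⟨ι, hι, z, w, hrange, haff, hpos, hsum1, hsumx⟩ :=
    eq_pos_convex_span_of_mem_convexHull hx
  set N := Module.finrank ℝ E' + 1 with hN
  have hcard : Fintype.card ι ≤ N :=
    haff.card_le_finrank_succ.trans (Nat.add_le_add_right (Submodule.finrank_le _) 1)
  have hne : Nonempty ι := by
    rcases isEmpty_or_nonempty ι with h | h
    · simp [Finset.univ_eq_empty] at hsum1
    · exact h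
  set m := Fintype.card ι with hm
  have hm0 : 0 < m := Fintype.card_pos
  let e : Fin m ≃ ι := (Fintype.equivFin ι).symm
  refine ⟨fun j => if h : (j : ℕ) < m then z (e ⟨j, h⟩) else z (e ⟨0, hm0⟩),
    fun j => if h : (j : ℕ) < m then w (e ⟨j, h⟩) else 0, ?_, ?_, ?_, ?_⟩
  · intro j
    by_cases h : (j : ℕ) < m <;> simp only [dif_pos, dif_neg, h] <;>
      exact hrange (Set.mem_range_self _)
  · intro j
    by_cases h : (j : ℕ) < m
    · simp only [dif_pos h]; exact (hpos _).le
    · simp only [dif_neg h]; exact le_refl _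
  · rw [← hsum1]; exact sum_pad hcard e w
  · rw [← hsumx]
    have : ∀ j : Fin N,
        (if h : (j : ℕ) < m then w (e ⟨j, h⟩) else 0) •
          (if h : (j : ℕ) < m then z (e ⟨j, h⟩) else z (e ⟨0, hm0⟩)) =
        (if h : (j : ℕ) < m then w (e ⟨j, h⟩) • z (e ⟨j, h⟩) else 0) := by
      intro j
      by_cases h : (j : ℕ) < m <;> simp [h]
    exact (Finset.sum_congr rfl fun j _ => this j).trans
      (sum_pad hcard e (fun i => w i • z i))

/-- Termwise upper bound used in the limit argument. -/
lemma term_bound {X : Type*} [TopologicalSpace X] {C : Set X} {F : X → ℝ} {M : ℝ}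
    (hM : ∀ x ∈ C, |F x| ≤ M) (husc : UpperSemicontinuousOn F C)
    {a : ℕ → X} {A : X} (haC : ∀ n, a n ∈ C) (hAC : A ∈ C)
    (ha : Tendsto a atTop (𝓝 A))
    {b : ℕ → ℝ} {B : ℝ} (hb0 : ∀ n, 0 ≤ b n) (hb : Tendsto b atTop (𝓝 B))
    {δ : ℝ} (hδ : 0 < δ) :
    ∀ᶠ n in atTop, b n * F (a n) ≤ B * F A + δ := by
  have hM0 : 0 ≤ M := (abs_nonneg _).trans (hM A hAC)
  have hB0 : 0 ≤ B := le_of_tendsto_of_tendsto' tendsto_const_nhds hb hb0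
  rcases eq_or_lt_of_le hB0 with hB | hB
  · -- B = 0
    have hsmall : ∀ᶠ n in atTop, b n < δ / (M + 1) := by
      have : Tendsto b atTop (𝓝 0) := by rwa [← hB] at hb
      exact (this.eventually (eventually_lt_nhds (div_pos hδ (by linarith))))
    filter_upwards [hsmall] with n hn
    have h1 : b n * F (a n) ≤ b n * M := by
      have := (abs_le.1 (hM _ (haC n))).2
      exact mul_le_mul_of_nonneg_left this (hb0 n)
    have h2 : b n * M ≤ (δ / (M + 1)) * M :=
      mul_le_mul_of_nonneg_right hn.le hM0
    have h3 : (δ / (M + 1)) * M ≤ δ := by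
      rw [div_mul_eq_mul_div, div_le_iff₀ (by linarith : (0:ℝ) < M + 1)]
      nlinarith
    have : B * F A = 0 := by rw [← hB]; ring
    linarith
  · -- B > 0
    have hBne : B ≠ 0 := ne_of_gt hB
    obtain ⟨t, ht⟩ : ∃ t : ℝ, t = F A + δ / (2 * B) := ⟨_, rfl⟩
    have htFA : F A < t := by
      have : 0 < δ / (2 * B) := div_pos hδ (by linarith)
      rw [ht]; linarith
    have husc' : ∀ᶠ n in atTop, F (a n) < t := by
      have h1 : Tendsto a atTop (𝓝[C] A) :=
        tendsto_nhdsWithin_of_tendsto_nhds_of_eventually_within a ha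
          (Eventually.of_forall haC)
      exact h1.eventually (husc A hAC t htFA)
    have hbt : Tendsto (fun n => b n * t) atTop (𝓝 (B * t)) :=
      hb.mul tendsto_const_nhds
    have h2 : ∀ᶠ n in atTop, b n * t < B * t + δ / 2 :=
      hbt.eventually (eventually_lt_nhds (by linarith))
    filter_upwards [husc', h2] with n h1 h2
    have h3 : b n * F (a n) ≤ b n * t :=
      mul_le_mul_of_nonneg_left h1.le (hb0 n)
    have h4 : B * t = B * F A + δ / 2 := by
      rw [ht]; field_simp
    linarith [h3, h2, h4.le]

end Aux

theorem concave_roof_extension_upper_semicontinuous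
    {E : Type*} [NormedAddCommGroup E] [NormedSpace ℝ E] [FiniteDimensional ℝ E]
    (C : Set E) (hC : IsCompact C) (F : E → ℝ)
    (hbdd : ∃ M : ℝ, ∀ x ∈ C, |F x| ≤ M)
    (husc : UpperSemicontinuousOn F C)
    (hconc : ∀ (k : ℕ) (x : Fin k → E) (q : Fin k → ℝ),
      (∀ i, x i ∈ C) → (∀ i, 0 ≤ q i) → ∑ i, q i = 1 → (∑ i, q i • x i) ∈ C →
      ∑ i, q i * F (x i) ≤ F (∑ i, q i • x i))
    (Fhat : E → ℝ)
    (hFhat : ∀ x : E, Fhat x =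
      sSup {r : ℝ | ∃ (k : ℕ) (y : Fin k → E) (q : Fin k → ℝ),
        (∀ i, y i ∈ C) ∧ (∀ i, 0 ≤ q i) ∧ ∑ i, q i = 1 ∧
        ∑ i, q i • y i = x ∧ ∑ i, q i * F (y i) = r}) :
    UpperSemicontinuousOn Fhat (convexHull ℝ C) := by
  classical
  obtain ⟨M, hM⟩ := hbdd
  set S : E → Set ℝ := fun x => {r : ℝ | ∃ (k : ℕ) (y : Fin k → E) (q : Fin k → ℝ),
    (∀ i, y i ∈ C) ∧ (∀ i, 0 ≤ q i) ∧ ∑ i, q i = 1 ∧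
    ∑ i, q i • y i = x ∧ ∑ i, q i * F (y i) = r} with hS
  -- basic facts about S
  have hbdd' : ∀ x : E, BddAbove (S x) := by
    intro x
    refine ⟨M, fun r hr => ?_⟩
    obtain ⟨k, y, q, hyC, hq0, hq1, -, hval⟩ := hr
    calc r = ∑ i, q i * F (y i) := hval.symm
      _ ≤ ∑ i, q i * M := by
          refine Finset.sum_le_sum fun i _ => ?_
          exact mul_le_mul_of_nonneg_left (abs_le.1 (hM _ (hyC i))).2 (hq0 i)
      _ = M := by rw [← Finset.sum_mul, hq1, one_mul]
  have hnonempty : ∀ x ∈ convexHull ℝ C, (S x).Nonempty := by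
    intro x hx
    obtain ⟨z, q, hzC, hq0, hq1, hsum⟩ := carat_fin hx
    exact ⟨∑ i, q i * F (z i), _, z, q, hzC, hq0, hq1, hsum, rfl⟩
  have hmemK : ∀ x ∈ convexHull ℝ C, ∀ v ∈ S x,
      (x, v) ∈ convexHull ℝ ((fun c => (c, F c)) '' C) := by
    intro x _ v hv
    obtain ⟨k, y, q, hyC, hq0, hq1, hsum, hval⟩ := hv
    have : (x, v) = ∑ i, q i • ((y i, F (y i)) : E × ℝ) := by
      rw [Prod.ext_iff]
      constructor
      · rw [Prod.fst_sum]; simp only [Prod.smul_fst]; exact hsum.symm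
      · rw [Prod.snd_sum]; simp only [Prod.smul_snd, smul_eq_mul]; exact hval.symm
    rw [this]
    refine (convex_convexHull ℝ _).sum_mem (fun i _ => hq0 i) hq1 fun i _ => ?_
    exact subset_convexHull ℝ _ ⟨y i, hyC i, rfl⟩
  -- the main argument
  intro x hx r hr
  by_contra hcon
  rw [Filter.not_eventually] at hcon
  have hfreq : ∃ᶠ y in 𝓝[convexHull ℝ C] x, r ≤ Fhat y ∧ y ∈ convexHull ℝ C := by
    refine (hcon.mono fun y hy => not_lt.1 hy).and_eventually self_mem_nhdsWithin
  obtain ⟨u, hu_tendsto, hu⟩ := Filter.exists_seq_forall_of_frequently hfreq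
  have hu_nhds : Tendsto u atTop (𝓝 x) := hu_tendsto.mono_right nhdsWithin_le_nhds
  set r' : ℝ := (Fhat x + r) / 2 with hr'
  have hr'1 : Fhat x < r' := by simp only [hr']; linarith
  have hr'2 : r' < r := by simp only [hr']; linarith
  set N := Module.finrank ℝ (E × ℝ) + 1 with hNdef
  have hN0 : 0 < N := Nat.succ_pos _
  -- for each n, a fixed-size decomposition of u n with value > r'
  have hstep : ∀ n : ℕ, ∃ (z : Fin N → E) (q : Fin N → ℝ),
      (∀ i, z i ∈ C) ∧ (∀ i, 0 ≤ q i) ∧ ∑ i, q i = 1 ∧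
      ∑ i, q i • z i = u n ∧ r' < ∑ i, q i * F (z i) := by
    intro n
    have h1 : r' < sSup (S (u n)) := lt_of_lt_of_le hr'2 ((hFhat (u n)) ▸ (hu n).1)
    obtain ⟨v, hvS, hv⟩ := exists_lt_of_lt_csSup (hnonempty _ (hu n).2) h1
    have hmem := hmemK _ (hu n).2 v hvS
    obtain ⟨z, q, hzG, hq0, hq1, hsum⟩ := carat_fin hmem
    have hzC : ∀ i, (z i).1 ∈ C ∧ (z i).2 = F ((z i).1) := by
      intro i
      obtain ⟨c, hc, hzc⟩ := hzG i
      rw [← hzc]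
      exact ⟨hc, rfl⟩
    refine ⟨fun i => (z i).1, q, fun i => (hzC i).1, hq0, hq1, ?_, ?_⟩
    · have := congrArg Prod.fst hsum
      rw [Prod.fst_sum] at this
      simpa only [Prod.smul_fst] using this
    · have := congrArg Prod.snd hsum
      rw [Prod.snd_sum] at this
      simp only [Prod.smul_snd, smul_eq_mul] at this
      have heq : ∑ i, q i * F ((z i).1) = v := by
        rw [← this]
        exact Finset.sum_congr rfl fun i _ => by rw [(hzC i).2]
      rw [heq]; exact hv
  choose z q hzC hq0 hq1 hsum hval using hstep
  -- compactness: extract a convergent subsequence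
  set T : Set ((Fin N → E) × (Fin N → ℝ)) :=
    (Set.univ.pi fun _ : Fin N => C) ×ˢ (Set.univ.pi fun _ : Fin N => Set.Icc (0:ℝ) 1)
    with hT
  have hTcompact : IsCompact T :=
    (isCompact_univ_pi fun _ => hC).prod (isCompact_univ_pi fun _ => isCompact_Icc)
  have hmemT : ∀ n, (z n, q n) ∈ T := by
    intro n
    refine ⟨fun i _ => hzC n i, fun i _ => ⟨hq0 n i, ?_⟩⟩
    calc q n i ≤ ∑ j, q n j :=
          Finset.single_le_sum (fun j _ => hq0 n j) (Finset.mem_univ i)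
      _ = 1 := hq1 n
  obtain ⟨⟨Z, Q⟩, hZQ, φ, hφ, htend⟩ := hTcompact.tendsto_subseq hmemT
  have hZC : ∀ i, Z i ∈ C := fun i => hZQ.1 i (Set.mem_univ i)
  have hQ0 : ∀ i, 0 ≤ Q i := fun i => (hZQ.2 i (Set.mem_univ i)).1
  have hztend : ∀ i, Tendsto (fun n => z (φ n) i) atTop (𝓝 (Z i)) := by
    intro i
    have h1 : Tendsto (fun n => z (φ n)) atTop (𝓝 Z) :=
      ((continuous_fst.tendsto _).comp htend)
    exact (tendsto_pi_nhds.1 h1) i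
  have hqtend : ∀ i, Tendsto (fun n => q (φ n) i) atTop (𝓝 (Q i)) := by
    intro i
    have h1 : Tendsto (fun n => q (φ n)) atTop (𝓝 Q) :=
      ((continuous_snd.tendsto _).comp htend)
    exact (tendsto_pi_nhds.1 h1) i
  -- the limit is a decomposition of x
  have hQ1 : ∑ i, Q i = 1 := by
    have h1 : Tendsto (fun n => ∑ i, q (φ n) i) atTop (𝓝 (∑ i, Q i)) :=
      tendsto_finset_sum _ fun i _ => hqtend i
    have h2 : Tendsto (fun n => ∑ i, q (φ n) i) atTop (𝓝 1) := by
      simp only [hq1]; exact tendsto_const_nhds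
    exact tendsto_nhds_unique h1 h2
  have hQsum : ∑ i, Q i • Z i = x := by
    have h1 : Tendsto (fun n => ∑ i, q (φ n) i • z (φ n) i) atTop
        (𝓝 (∑ i, Q i • Z i)) :=
      tendsto_finset_sum _ fun i _ => (hqtend i).smul (hztend i)
    have h2 : Tendsto (fun n => ∑ i, q (φ n) i • z (φ n) i) atTop (𝓝 x) := by
      simp only [hsum]
      exact hu_nhds.comp hφ.tendsto_atTop
    exact tendsto_nhds_unique h1 h2
  set v' : ℝ := ∑ i, Q i * F (Z i) with hv'
  have hv'S : v' ∈ S x := ⟨N, Z, Q, hZC, hQ0, hQ1, hQsum, rfl⟩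
  have hv'le : v' ≤ Fhat x := by
    rw [hFhat x]
    exact le_csSup (hbdd' x) hv'S
  -- r' ≤ v'
  have hr'v' : r' ≤ v' := by
    refine le_of_forall_pos_le_add fun ε hε => ?_
    have hterm : ∀ i : Fin N, ∀ᶠ n in atTop,
        q (φ n) i * F (z (φ n) i) ≤ Q i * F (Z i) + ε / N := by
      intro i
      refine term_bound hM husc (fun n => hzC (φ n) i) (hZC i) (hztend i)
        (fun n => hq0 (φ n) i) (hqtend i) ?_
      exact div_pos hε (Nat.cast_pos.2 hN0)
    have hall : ∀ᶠ n in atTop, ∀ i : Fin N,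
        q (φ n) i * F (z (φ n) i) ≤ Q i * F (Z i) + ε / N :=
      eventually_all.2 hterm
    obtain ⟨n, hn⟩ := hall.exists
    have h1 : r' < ∑ i, q (φ n) i * F (z (φ n) i) := hval (φ n)
    have h2 : ∑ i, q (φ n) i * F (z (φ n) i) ≤ ∑ i, (Q i * F (Z i) + ε / N) :=
      Finset.sum_le_sum fun i _ => hn i
    have h3 : ∑ i : Fin N, (Q i * F (Z i) + ε / N) = v' + ε := by
      rw [Finset.sum_add_distrib, Finset.sum_const, Finset.card_univ, Fintype.card_fin]
      have : (N : ℝ) ≠ 0 := Nat.cast_ne_zero.2 hN0.ne'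
      have hNe : (N : ℝ) * (ε / N) = ε := by field_simp
      rw [nsmul_eq_mul, hNe]
    linarith
  linarith
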